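/- Assume the L²-SVD u = Σ_{k} σ_k^{00} ψ_k ⊗ φ_k converges in H¹(Ω). Then for every r: σ_r^{10} = ‖ψ_r¹‖₀^{-1/2} ( Σ_{k=1}^∞ (σ_k^{00})⁴ |⟨ψ_r¹, ψ_k⟩₁|² )^{1/4} ≥ σ_r^{00} ( ⟨ψ_r¹, ψ_r⟩₁ / ‖ψ_r¹‖₀ )^{1/2}, and σ_r^{01} = ‖φ_r¹‖₀^{-1/2} ( Σ_{k=1}^∞ (σ_k^{00})⁴ |⟨φ_r¹, φ_k⟩₁|² )^{1/4} ≥ σ_r^{00} ( ⟨φ_r¹, φ_r⟩₁ / ‖φ_r¹‖₀ )^{1/2}. -/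
import Mathlib



/-!
STATEMENT 1 (Theorem `singvalsbounds`).

Abstract setting: `H1₁, L2₁` model `H¹(Ω₁) ↪ L²(Ω₁)` (via `ι₁`) and `H1₂, L2₂` model
`H¹(Ω₂) ↪ L²(Ω₂)` (via `ι₂`).  `H` models `H¹(Ω)` with the continuous bilinear elementary
tensor map `tp1`; `H10` models `H^{(1,0)} = H¹(Ω₁) ⊗ L²(Ω₂)` and `H01` models
`H^{(0,1)} = L²(Ω₁) ⊗ H¹(Ω₂)`, with their canonical (induced) inner products and the
embeddings `e10 : H¹(Ω) ↪ H^{(1,0)}`, `e01 : H¹(Ω) ↪ H^{(0,1)}`.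
The three SVDs of `u` are given by orthonormal systems together with convergent expansions;
in particular the `L²`-SVD `u = ∑ σ00_k ψ_k ⊗ φ_k` is assumed to converge in `H¹(Ω)`.
-/

open scoped RealInnerProductSpace
open Filter

/-- A Cauchy net converging weakly converges strongly to its weak limit. -/
lemma aux_tendsto_of_cauchySeq_of_weak {E : Type*} [NormedAddCommGroup E]
    [InnerProductSpace ℝ E] {κ : Type*} [SemilatticeSup κ] [Nonempty κ]
    {q : κ → E} (hq : CauchySeq q) {l : E}
    (hw : ∀ x : E, Tendsto (fun F => ⟪q F, x⟫) atTop (nhds ⟪l, x⟫)) :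
    Tendsto q atTop (nhds l) := by
  rw [Metric.tendsto_atTop]
  intro ε hε
  obtain ⟨N, hN⟩ := Metric.cauchySeq_iff.mp hq (ε / 2) (by linarith)
  refine ⟨N, fun F hF => ?_⟩
  have key : ‖q F - l‖ ^ 2 ≤ ‖q F - l‖ * (ε / 2) := by
    have h1 : Tendsto (fun G => ⟪q F - l, q F - q G⟫) atTop
        (nhds (‖q F - l‖ ^ 2)) := by
      have h2 := hw (q F - l)
      have h3 : Tendsto (fun G : κ => ⟪q F - l, q F⟫ - ⟪q G, q F - l⟫) atTop
          (nhds (⟪q F - l, q F⟫ - ⟪l, q F - l⟫)) := (tendsto_const_nhds).sub h2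
      have h4 : (fun G : κ => ⟪q F - l, q F⟫ - ⟪q G, q F - l⟫)
          = fun G : κ => ⟪q F - l, q F - q G⟫ := by
        funext G
        simp only [inner_sub_left, inner_sub_right]
        rw [real_inner_comm (q G) (q F), real_inner_comm (q G) l]
      rw [h4] at h3
      have h5 : ⟪q F - l, q F⟫ - ⟪l, q F - l⟫ = ‖q F - l‖ ^ 2 := by
        have := real_inner_self_eq_norm_sq (q F - l)
        simp only [inner_sub_left, inner_sub_right] at this ⊢
        linarith [this, real_inner_comm (q F) l]
      rwa [h5] at h3
    refine le_of_tendsto h1 ?_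
    filter_upwards [eventually_ge_atTop (N ⊔ F)] with G hG
    have hGN : G ≥ N := le_trans le_sup_left hG
    have hd : dist (q F) (q G) < ε / 2 := hN F hF G hGN
    calc ⟪q F - l, q F - q G⟫ ≤ ‖q F - l‖ * ‖q F - q G‖ :=
          real_inner_le_norm _ _
      _ ≤ ‖q F - l‖ * (ε / 2) := by
          have : ‖q F - q G‖ ≤ ε / 2 := by
            rw [← dist_eq_norm]; linarith
          exact mul_le_mul_of_nonneg_left this (norm_nonneg _)
  have hle : ‖q F - l‖ ≤ ε / 2 := by
    rcases eq_or_lt_of_le (norm_nonneg (q F - l)) with h | h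
    · rw [← h]; linarith
    · nlinarith [sq_nonneg (‖q F - l‖)]
  rw [dist_eq_norm]
  linarith

lemma aux_key {g : ℕ → ℝ} {x : ℝ} (j : ℕ) (c : ℝ) (hg : HasSum g x)
    (hgk : ∀ k, g k = if k = j then c else 0) : x = c := by
  have h : HasSum (fun k => if k = j then c else 0) x := by
    rwa [show g = fun k => if k = j then c else 0 from funext hgk] at hg
  exact h.unique (hasSum_ite_eq j c)

lemma aux_core {E E' F G : Type*}
    [NormedAddCommGroup E] [InnerProductSpace ℝ E]
    [NormedAddCommGroup E'] [InnerProductSpace ℝ E']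
    [NormedAddCommGroup F] [InnerProductSpace ℝ F]
    [NormedAddCommGroup G] [InnerProductSpace ℝ G]
    (ι : E →L[ℝ] E') (hι : Function.Injective ι)
    (tp : E →L[ℝ] F →L[ℝ] G)
    (hcross : ∀ (x x' : E) (y y' : F), ⟪tp x y, tp x' y'⟫ = ⟪x, x'⟫ * ⟪y, y'⟫)
    (σ0 : ℕ → ℝ) (hσ0p : ∀ k, 0 ≤ σ0 k)
    (ψ : ℕ → E) (f : ℕ → F)
    (hψON : Orthonormal ℝ (fun k => ι (ψ k))) (hfON : Orthonormal ℝ f)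
    (v : G) (hv : HasSum (fun k => σ0 k • tp (ψ k) (f k)) v)
    (σ1 : ℕ → ℝ) (hσ1p : ∀ k, 0 ≤ σ1 k)
    (ψ1 : ℕ → E) (φ0 : ℕ → F)
    (hψ1ON : Orthonormal ℝ ψ1) (hφ0ON : Orthonormal ℝ φ0)
    (hSVD : HasSum (fun k => σ1 k • tp (ψ1 k) (φ0 k)) v) (r : ℕ) :
    σ1 r = ‖ι (ψ1 r)‖ ^ (-(1 : ℝ) / 2) *
        (∑' k : ℕ, σ0 k ^ 4 * |⟪ψ1 r, ψ k⟫| ^ 2) ^ ((1 : ℝ) / 4) ∧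
      σ0 r * (⟪ψ1 r, ψ r⟫ / ‖ι (ψ1 r)‖) ^ ((1 : ℝ) / 2) ≤ σ1 r := by
  -- pairing sums
  have hv' : ∀ y : G, HasSum (fun k => σ0 k * ⟪y, tp (ψ k) (f k)⟫) ⟪y, v⟫ := by
    intro y
    have h := (innerSL ℝ y).hasSum hv
    simpa only [innerSL_apply_apply, real_inner_smul_right] using h
  have hS' : ∀ y : G, HasSum (fun k => σ1 k * ⟪y, tp (ψ1 k) (φ0 k)⟫) ⟪y, v⟫ := by
    intro y
    have h := (innerSL ℝ y).hasSum hSVD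
    simpa only [innerSL_apply_apply, real_inner_smul_right] using h
  -- step 2 : σ0 j * a j = σ1 r * b j
  have h2 : ∀ j, σ0 j * ⟪ψ1 r, ψ j⟫ = σ1 r * ⟪f j, φ0 r⟫ := by
    intro j
    have hA : ⟪tp (ψ1 r) (f j), v⟫ = σ0 j * ⟪ψ1 r, ψ j⟫ := by
      refine aux_key j _ (hv' (tp (ψ1 r) (f j))) fun k => ?_
      rw [hcross, orthonormal_iff_ite.mp hfON j k]
      by_cases h : k = j
      · subst h; simp
      · simp [h, Ne.symm h]
    have hB : ⟪tp (ψ1 r) (f j), v⟫ = σ1 r * ⟪f j, φ0 r⟫ := by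
      refine aux_key r _ (hS' (tp (ψ1 r) (f j))) fun k => ?_
      rw [hcross, orthonormal_iff_ite.mp hψ1ON r k]
      by_cases h : k = r
      · subst h; simp
      · simp [h, Ne.symm h]
    rw [← hA, hB]
  -- the partial sums
  have hqS : ∀ (s : Finset ℕ) (x : E),
      ⟪∑ k ∈ s, (σ0 k * ⟪f k, φ0 r⟫) • ψ k, x⟫
        = ⟪∑ k ∈ s, σ0 k • tp (ψ k) (f k), tp x (φ0 r)⟫ := by
    intro s x
    rw [sum_inner, sum_inner]
    refine Finset.sum_congr rfl fun k _ => ?_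
    rw [real_inner_smul_left, real_inner_smul_left, hcross]
    ring
  -- Cauchyness
  have hnormtp : ∀ (x : E) (y : F), ‖tp x y‖ = ‖x‖ * ‖y‖ := by
    intro x y
    have h1 : ‖tp x y‖ ^ 2 = (‖x‖ * ‖y‖) ^ 2 := by
      rw [← real_inner_self_eq_norm_sq, hcross, real_inner_self_eq_norm_sq,
        real_inner_self_eq_norm_sq]
      ring
    rw [← Real.sqrt_sq (norm_nonneg (tp x y)), h1,
      Real.sqrt_sq (by positivity)]
  have hvS : Filter.Tendsto (fun s : Finset ℕ => ∑ k ∈ s, σ0 k • tp (ψ k) (f k))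
      atTop (nhds v) := hv
  have hqCauchy : CauchySeq (fun s : Finset ℕ => ∑ k ∈ s, (σ0 k * ⟪f k, φ0 r⟫) • ψ k) := by
    have hSC : CauchySeq (fun s : Finset ℕ => ∑ k ∈ s, σ0 k • tp (ψ k) (f k)) :=
      hvS.cauchySeq
    rw [Metric.cauchySeq_iff] at hSC ⊢
    intro ε hε
    obtain ⟨N, hN⟩ := hSC ε hε
    refine ⟨N, fun m hm n hn => ?_⟩
    set qm := ∑ k ∈ m, (σ0 k * ⟪f k, φ0 r⟫) • ψ k
    set qn := ∑ k ∈ n, (σ0 k * ⟪f k, φ0 r⟫) • ψ k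
    set Sm := ∑ k ∈ m, σ0 k • tp (ψ k) (f k)
    set Sn := ∑ k ∈ n, σ0 k • tp (ψ k) (f k)
    have hqd : ‖qm - qn‖ ≤ ‖Sm - Sn‖ := by
      have hpair : ⟪qm - qn, qm - qn⟫ = ⟪Sm - Sn, tp (qm - qn) (φ0 r)⟫ := by
        rw [inner_sub_left, inner_sub_left, hqS, hqS]
      have hcs : ⟪Sm - Sn, tp (qm - qn) (φ0 r)⟫
          ≤ ‖Sm - Sn‖ * ‖tp (qm - qn) (φ0 r)‖ := real_inner_le_norm _ _
      rw [hnormtp, hφ0ON.1 r, mul_one] at hcs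
      have hsq : ‖qm - qn‖ ^ 2 ≤ ‖Sm - Sn‖ * ‖qm - qn‖ := by
        rw [← real_inner_self_eq_norm_sq]
        linarith [hpair, hcs]
      rcases eq_or_lt_of_le (norm_nonneg (qm - qn)) with h0 | h0
      · rw [← h0]; exact norm_nonneg _
      · nlinarith
    have hd := hN m hm n hn
    rw [dist_eq_norm] at hd ⊢
    exact lt_of_le_of_lt hqd hd
  -- weak convergence
  have hvinner : ∀ x : E, ⟪tp x (φ0 r), v⟫ = σ1 r * ⟪ψ1 r, x⟫ := by
    intro x
    refine aux_key r _ (hS' (tp x (φ0 r))) fun k => ?_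
    rw [hcross, orthonormal_iff_ite.mp hφ0ON r k]
    by_cases h : k = r
    · subst h; simp [real_inner_comm]
    · simp [h, Ne.symm h]
  have hweak : ∀ x : E,
      Tendsto (fun s : Finset ℕ => ⟪∑ k ∈ s, (σ0 k * ⟪f k, φ0 r⟫) • ψ k, x⟫)
        atTop (nhds ⟪σ1 r • ψ1 r, x⟫) := by
    intro x
    have h1 : Tendsto (fun s : Finset ℕ =>
        ⟪∑ k ∈ s, σ0 k • tp (ψ k) (f k), tp x (φ0 r)⟫) atTop
        (nhds ⟪v, tp x (φ0 r)⟫) := hvS.inner tendsto_const_nhds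
    have h2' : ⟪v, tp x (φ0 r)⟫ = ⟪σ1 r • ψ1 r, x⟫ := by
      rw [real_inner_comm, hvinner, real_inner_smul_left]
    rw [h2'] at h1
    refine h1.congr fun s => ?_
    rw [hqS]
  -- strong convergence & HasSum
  have h5 : HasSum (fun k => (σ0 k * ⟪f k, φ0 r⟫) • ψ k) (σ1 r • ψ1 r) :=
    aux_tendsto_of_cauchySeq_of_weak hqCauchy hweak
  have h6 : HasSum (fun k => (σ0 k * ⟪f k, φ0 r⟫) • ι (ψ k)) (σ1 r • ι (ψ1 r)) := by
    have h := ι.hasSum h5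
    simpa only [map_smul] using h
  -- coefficients
  have h7 : ∀ j, ⟪σ1 r • ι (ψ1 r), ι (ψ j)⟫ = σ0 j * ⟪f j, φ0 r⟫ := by
    intro j
    rw [real_inner_comm]
    refine aux_key j _ ((innerSL ℝ (ι (ψ j))).hasSum h6) fun k => ?_
    simp only [innerSL_apply_apply, real_inner_smul_right]
    rw [show (⟪ι (ψ j), ι (ψ k)⟫ : ℝ) = if j = k then 1 else 0 from
      orthonormal_iff_ite.mp hψON j k]
    by_cases h : k = j
    · subst h; simp
    · simp [h, Ne.symm h]
  -- Parseval
  have h8 : HasSum (fun k => (σ0 k * ⟪f k, φ0 r⟫) ^ 2)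
      (σ1 r ^ 2 * ‖ι (ψ1 r)‖ ^ 2) := by
    have h := (innerSL ℝ (σ1 r • ι (ψ1 r))).hasSum h6
    simp only [innerSL_apply_apply, real_inner_smul_right] at h
    have hval : ⟪σ1 r • ι (ψ1 r), σ1 r • ι (ψ1 r)⟫ = σ1 r ^ 2 * ‖ι (ψ1 r)‖ ^ 2 := by
      rw [real_inner_smul_left, real_inner_smul_right, real_inner_self_eq_norm_sq]
      ring
    rw [show σ1 r * ⟪σ1 r • ι (ψ1 r), ι (ψ1 r)⟫ = σ1 r ^ 2 * ‖ι (ψ1 r)‖ ^ 2 from by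
      rw [real_inner_smul_left, real_inner_self_eq_norm_sq]; ring] at h
    rw [show (fun b => σ0 b * ⟪f b, φ0 r⟫ * ⟪σ1 r • ι (ψ1 r), ι (ψ b)⟫)
        = fun k => (σ0 k * ⟪f k, φ0 r⟫) ^ 2 from funext fun k => by
      rw [h7 k]; ring] at h
    exact h
  -- the master sum
  have h9 : HasSum (fun k => σ0 k ^ 4 * |⟪ψ1 r, ψ k⟫| ^ 2)
      (σ1 r ^ 4 * ‖ι (ψ1 r)‖ ^ 2) := by
    have h := h8.mul_left (σ1 r ^ 2)
    rw [show (fun k => σ1 r ^ 2 * (σ0 k * ⟪f k, φ0 r⟫) ^ 2)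
        = fun k => σ0 k ^ 4 * |⟪ψ1 r, ψ k⟫| ^ 2 from funext fun k => by
      rw [sq_abs]
      calc σ1 r ^ 2 * (σ0 k * ⟪f k, φ0 r⟫) ^ 2
          = σ0 k ^ 2 * (σ1 r * ⟪f k, φ0 r⟫) ^ 2 := by ring
        _ = σ0 k ^ 2 * (σ0 k * ⟪ψ1 r, ψ k⟫) ^ 2 := by rw [← h2 k]
        _ = σ0 k ^ 4 * ⟪ψ1 r, ψ k⟫ ^ 2 := by ring,
      show σ1 r ^ 2 * (σ1 r ^ 2 * ‖ι (ψ1 r)‖ ^ 2) = σ1 r ^ 4 * ‖ι (ψ1 r)‖ ^ 2 from by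
        ring] at h
    exact h
  have hN0 : 0 < ‖ι (ψ1 r)‖ := by
    rw [norm_pos_iff]
    intro h0
    have hz : ψ1 r = 0 := hι (by simpa using h0)
    have h1 := hψ1ON.1 r
    rw [hz, norm_zero] at h1
    norm_num at h1
  constructor
  · -- the equality
    rw [h9.tsum_eq]
    have h1 : (σ1 r ^ 4 * ‖ι (ψ1 r)‖ ^ 2 : ℝ) ^ ((1 : ℝ) / 4)
        = σ1 r * ‖ι (ψ1 r)‖ ^ ((1 : ℝ) / 2) := by
      rw [Real.mul_rpow (by positivity) (by positivity),
        ← Real.rpow_natCast (σ1 r) 4, ← Real.rpow_natCast ‖ι (ψ1 r)‖ 2,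
        ← Real.rpow_mul (hσ1p r), ← Real.rpow_mul hN0.le]
      norm_num
    rw [h1, show (-(1 : ℝ) / 2) = -((1 : ℝ) / 2) from by ring,
      Real.rpow_neg hN0.le]
    have hne : ‖ι (ψ1 r)‖ ^ ((1 : ℝ) / 2) ≠ 0 :=
      ne_of_gt (Real.rpow_pos_of_pos hN0 _)
    field_simp
  · -- the inequality
    have hge : σ0 r ^ 4 * ⟪ψ1 r, ψ r⟫ ^ 2 ≤ σ1 r ^ 4 * ‖ι (ψ1 r)‖ ^ 2 := by
      have h := le_hasSum h9 r (fun j _ => by positivity)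
      rwa [sq_abs] at h
    rw [← Real.sqrt_eq_rpow]
    rcases le_or_gt ⟪ψ1 r, ψ r⟫ 0 with har | har
    · rw [Real.sqrt_eq_zero'.mpr (div_nonpos_of_nonpos_of_nonneg har hN0.le)]
      simpa using hσ1p r
    · have hx : (0 : ℝ) < ⟪ψ1 r, ψ r⟫ / ‖ι (ψ1 r)‖ := div_pos har hN0
      refine le_of_pow_le_pow_left₀ (n := 4) (by norm_num) (hσ1p r) ?_
      have hsq : Real.sqrt (⟪ψ1 r, ψ r⟫ / ‖ι (ψ1 r)‖) ^ 4
          = (⟪ψ1 r, ψ r⟫ / ‖ι (ψ1 r)‖) ^ 2 := by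
        rw [show (4 : ℕ) = 2 * 2 from rfl, pow_mul, Real.sq_sqrt hx.le]
      calc (σ0 r * Real.sqrt (⟪ψ1 r, ψ r⟫ / ‖ι (ψ1 r)‖)) ^ 4
          = σ0 r ^ 4 * Real.sqrt (⟪ψ1 r, ψ r⟫ / ‖ι (ψ1 r)‖) ^ 4 := by ring
        _ = σ0 r ^ 4 * (⟪ψ1 r, ψ r⟫ / ‖ι (ψ1 r)‖) ^ 2 := by rw [hsq]
        _ = σ0 r ^ 4 * ⟪ψ1 r, ψ r⟫ ^ 2 / ‖ι (ψ1 r)‖ ^ 2 := by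
            rw [div_pow]; ring
        _ ≤ σ1 r ^ 4 := by
            rw [div_le_iff₀ (by positivity)]
            linarith [hge]


theorem stmt_1
    (H1₁ L2₁ H1₂ L2₂ H H10 H01 : Type*)
    [NormedAddCommGroup H1₁] [InnerProductSpace ℝ H1₁]
    [NormedAddCommGroup L2₁] [InnerProductSpace ℝ L2₁]
    [NormedAddCommGroup H1₂] [InnerProductSpace ℝ H1₂]
    [NormedAddCommGroup L2₂] [InnerProductSpace ℝ L2₂]
    [NormedAddCommGroup H] [InnerProductSpace ℝ H]
    [NormedAddCommGroup H10] [InnerProductSpace ℝ H10]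
    [NormedAddCommGroup H01] [InnerProductSpace ℝ H01]
    (ι₁ : H1₁ →L[ℝ] L2₁) (ι₂ : H1₂ →L[ℝ] L2₂)
    (hι₁ : Function.Injective ι₁) (hι₂ : Function.Injective ι₂)
    (tp1 : H1₁ →L[ℝ] H1₂ →L[ℝ] H)
    (tp10 : H1₁ →L[ℝ] L2₂ →L[ℝ] H10)
    (tp01 : L2₁ →L[ℝ] H1₂ →L[ℝ] H01)
    (e10 : H →L[ℝ] H10) (e01 : H →L[ℝ] H01)
    -- canonical crossnorm inner products on the tensor spaces
    (h10cross : ∀ (x x' : H1₁) (y y' : L2₂),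
      ⟪tp10 x y, tp10 x' y'⟫ = ⟪x, x'⟫ * ⟪y, y'⟫)
    (h01cross : ∀ (x x' : L2₁) (y y' : H1₂),
      ⟪tp01 x y, tp01 x' y'⟫ = ⟪x, x'⟫ * ⟪y, y'⟫)
    -- compatibility of the embeddings with elementary tensors
    (he10 : ∀ x y, e10 (tp1 x y) = tp10 x (ι₂ y))
    (he01 : ∀ x y, e01 (tp1 x y) = tp01 (ι₁ x) y)
    (u : H)
    -- the `L²`-SVD of `u` : `u = ∑_k σ00_k ψ_k ⊗ φ_k`, converging in `H¹(Ω)`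
    (σ00 : ℕ → ℝ) (ψ : ℕ → H1₁) (φ : ℕ → H1₂)
    (hσ00a : Antitone σ00) (hσ00p : ∀ k, 0 ≤ σ00 k)
    (hψON : Orthonormal ℝ (fun k => ι₁ (ψ k)))
    (hφON : Orthonormal ℝ (fun k => ι₂ (φ k)))
    (hconv : HasSum (fun k => σ00 k • tp1 (ψ k) (φ k)) u)
    -- the `H^{(1,0)}`-SVD of `u`
    (σ10 : ℕ → ℝ) (ψ1 : ℕ → H1₁) (φ0 : ℕ → L2₂)
    (hσ10a : Antitone σ10) (hσ10p : ∀ k, 0 ≤ σ10 k)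
    (hψ1ON : Orthonormal ℝ ψ1) (hφ0ON : Orthonormal ℝ φ0)
    (h10SVD : HasSum (fun k => σ10 k • tp10 (ψ1 k) (φ0 k)) (e10 u))
    -- the `H^{(0,1)}`-SVD of `u`
    (σ01 : ℕ → ℝ) (ψ0 : ℕ → L2₁) (φ1 : ℕ → H1₂)
    (hσ01a : Antitone σ01) (hσ01p : ∀ k, 0 ≤ σ01 k)
    (hψ0ON : Orthonormal ℝ ψ0) (hφ1ON : Orthonormal ℝ φ1)
    (h01SVD : HasSum (fun k => σ01 k • tp01 (ψ0 k) (φ1 k)) (e01 u)) :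
    ∀ r : ℕ,
      (σ10 r = ‖ι₁ (ψ1 r)‖ ^ (-(1 : ℝ) / 2) *
          (∑' k : ℕ, σ00 k ^ 4 * |⟪ψ1 r, ψ k⟫| ^ 2) ^ ((1 : ℝ) / 4) ∧
        σ00 r * (⟪ψ1 r, ψ r⟫ / ‖ι₁ (ψ1 r)‖) ^ ((1 : ℝ) / 2) ≤ σ10 r) ∧
      (σ01 r = ‖ι₂ (φ1 r)‖ ^ (-(1 : ℝ) / 2) *
          (∑' k : ℕ, σ00 k ^ 4 * |⟪φ1 r, φ k⟫| ^ 2) ^ ((1 : ℝ) / 4) ∧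
        σ00 r * (⟪φ1 r, φ r⟫ / ‖ι₂ (φ1 r)‖) ^ ((1 : ℝ) / 2) ≤ σ01 r) := by
  intro r
  constructor
  · -- `(1,0)` side
    have hv10 : HasSum (fun k => σ00 k • tp10 (ψ k) (ι₂ (φ k))) (e10 u) := by
      have h := e10.hasSum hconv
      simpa only [map_smul, he10] using h
    exact aux_core ι₁ hι₁ tp10 h10cross σ00 hσ00p ψ (fun k => ι₂ (φ k)) hψON hφON
      (e10 u) hv10 σ10 hσ10p ψ1 φ0 hψ1ON hφ0ON h10SVD r
  · -- `(0,1)` side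
    have hcross' : ∀ (x x' : H1₂) (y y' : L2₁),
        ⟪tp01.flip x y, tp01.flip x' y'⟫ = ⟪x, x'⟫ * ⟪y, y'⟫ := by
      intro x x' y y'
      rw [ContinuousLinearMap.flip_apply, ContinuousLinearMap.flip_apply,
        h01cross, mul_comm]
    have hv01 : HasSum (fun k => σ00 k • tp01.flip (φ k) (ι₁ (ψ k))) (e01 u) := by
      have h := e01.hasSum hconv
      simpa only [map_smul, he01, ContinuousLinearMap.flip_apply] using h
    have hSVD' : HasSum (fun k => σ01 k • tp01.flip (φ1 k) (ψ0 k)) (e01 u) := by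
      simpa only [ContinuousLinearMap.flip_apply] using h01SVD
    exact aux_core ι₂ hι₂ tp01.flip hcross' σ00 hσ00p φ (fun k => ι₁ (ψ k)) hφON hψON
      (e01 u) hv01 σ01 hσ01p φ1 ψ0 hφ1ON hψ0ON hSVD' r
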